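/- arXiv:1804.02116 — 3 statements merged into one kernel-verified Lean document; each statement's English description precedes it below -/
import Mathlib

section
/- Let G = ⊕_{k∈ℤ} G_k be a direct sum of torsion-free abelian groups such that each G_k is homogeneous of type τ_k, where (τ_k)_{k∈ℤ} is a strictly increasing chain of types, and for each k there is a surjection G_{k-1} → X for every rank-1 group X of type τ_k. Then G is a self-pure-generator: every pure subgroup of G is G-generated. -/
open TensorProduct

/-- The pure submodule of `A` generated by `a`:
`⟨a⟩_* = {x ∈ A : r • x ∈ R a for some nonzero r ∈ R}`. -/
def pureGen (R : Type*) {A : Type*} [CommRing R] [IsDomain R] [AddCommGroup A]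
    [Module R A] (a : A) : Submodule R A where
  carrier := {x | ∃ r : R, r ≠ 0 ∧ ∃ s : R, r • x = s • a}
  zero_mem' := ⟨1, one_ne_zero, 0, by simp⟩
  add_mem' := by
    rintro x y ⟨r, hr, s, hx⟩ ⟨r', hr', s', hy⟩
    refine ⟨r * r', mul_ne_zero hr hr', r' * s + r * s', ?_⟩
    rw [smul_add, add_smul, mul_smul, mul_smul, mul_smul, smul_comm r r' x, hx, hy,
      smul_comm r' s a, smul_comm r s' a, smul_smul, smul_smul, mul_comm s' r]
  smul_mem' := by
    rintro c x ⟨r, hr, s, hx⟩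
    exact ⟨r, hr, c * s, by rw [smul_comm, hx, mul_smul]⟩
universe u

/-- A submodule `K ≤ A` is pure iff `A ⧸ K` is torsion-free, i.e.
`r • x ∈ K` with `r ≠ 0` implies `x ∈ K`. -/
def IsPureSubmodule (R : Type*) {A : Type*} [CommRing R] [AddCommGroup A]
    [Module R A] (K : Submodule R A) : Prop :=
  ∀ (r : R) (x : A), r ≠ 0 → r • x ∈ K → x ∈ K

/-- `K` is `A`-generated: some direct sum of copies of `A` surjects onto `K`. -/
def ModGenerated (R : Type*) {A : Type u} [CommRing R] [AddCommGroup A]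
    [Module R A] (K : Submodule R A) : Prop :=
  ∃ (ι : Type u) (f : (ι →₀ A) →ₗ[R] K), Function.Surjective f

/-- `A` is a self-pure-generator: every pure submodule of `A` is `A`-generated. -/
def SelfPureGenerator (R : Type*) (A : Type u) [CommRing R] [AddCommGroup A]
    [Module R A] : Prop :=
  ∀ K : Submodule R A, IsPureSubmodule R K → ModGenerated R K
/-! ### auxiliary lemmas about the rational coefficient of an element of a pure rank-1 subgroup -/

section Coef

variable {M : Type*} [AddCommGroup M]

theorem mem_pureGen {a y : M} : y ∈ pureGen ℤ a ↔ ∃ r : ℤ, r ≠ 0 ∧ ∃ s : ℤ, r • y = s • a :=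
  ⟨fun h => h, fun h => h⟩

theorem self_mem_pureGen (a : M) : a ∈ pureGen ℤ a := ⟨1, one_ne_zero, 1, rfl⟩

variable [NoZeroSMulDivisors ℤ M]

theorem zsmul_cancel_left {a b : M} {r : ℤ} (hr : r ≠ 0) (h : r • a = r • b) : a = b := by
  have h0 : r • (a - b) = 0 := by rw [smul_sub, h, sub_self]
  rcases eq_zero_or_eq_zero_of_smul_eq_zero h0 with h' | h'
  · exact absurd h' hr
  · exact sub_eq_zero.mp h'

theorem zsmul_int_cancel_right {a : M} (ha : a ≠ 0) {r s : ℤ} (h : r • a = s • a) : r = s := by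
  have h0 : (r - s) • a = 0 := by rw [sub_smul, h, sub_self]
  rcases eq_zero_or_eq_zero_of_smul_eq_zero h0 with h' | h'
  · exact sub_eq_zero.mp h'
  · exact absurd h' ha

noncomputable def coefAt (a : M) (y : ↥(pureGen ℤ a)) : ℚ :=
  (((mem_pureGen.mp y.2).choose_spec.2.choose : ℤ) : ℚ) / (((mem_pureGen.mp y.2).choose : ℤ) : ℚ)

theorem coef_eq {a : M} (ha : a ≠ 0) (y : ↥(pureGen ℤ a)) {r s : ℤ} (hr : r ≠ 0)
    (h : r • (y : M) = s • a) : coefAt a y = (s : ℚ) / (r : ℚ) := by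
  have hr₀ : (mem_pureGen.mp y.2).choose ≠ 0 := (mem_pureGen.mp y.2).choose_spec.1
  set r₀ := (mem_pureGen.mp y.2).choose with hr₀def
  set s₀ := (mem_pureGen.mp y.2).choose_spec.2.choose with hs₀def
  have h₀ : r₀ • (y : M) = s₀ • a := (mem_pureGen.mp y.2).choose_spec.2.choose_spec
  have key : (r₀ * s) • a = (r * s₀) • a := by
    rw [← smul_smul, ← smul_smul, ← h, ← h₀, smul_smul, smul_smul, mul_comm]
  have hint : r₀ * s = r * s₀ := zsmul_int_cancel_right ha key
  have hs₀ : coefAt a y = (s₀ : ℚ) / (r₀ : ℚ) := rfl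
  rw [hs₀, div_eq_div_iff (by exact_mod_cast hr₀) (by exact_mod_cast hr)]
  have : s₀ * r = s * r₀ := by linarith [hint]
  exact_mod_cast this

theorem smul_of_coef {a : M} (ha : a ≠ 0) (y : ↥(pureGen ℤ a)) {r s : ℤ} (hr : r ≠ 0)
    (h : coefAt a y = (s : ℚ) / (r : ℚ)) : r • (y : M) = s • a := by
  obtain ⟨r₀, hr₀, s₀, h₀⟩ := mem_pureGen.mp y.2
  have hc : coefAt a y = (s₀ : ℚ) / (r₀ : ℚ) := coef_eq ha y hr₀ h₀
  rw [hc] at h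
  have hint : s₀ * r = s * r₀ := by
    have := (div_eq_div_iff (by exact_mod_cast hr₀) (by exact_mod_cast hr)).mp h
    exact_mod_cast this
  have e1 : r₀ • (r • (y : M)) = (r * s₀) • a := by
    rw [smul_smul, mul_comm, ← smul_smul, h₀, smul_smul]
  have e2 : r * s₀ = r₀ * s := by linarith
  have : r₀ • (r • (y : M)) = r₀ • (s • a) := by rw [e1, e2, ← smul_smul]
  exact zsmul_cancel_left hr₀ this

noncomputable def coefHom (a : M) (ha : a ≠ 0) : ↥(pureGen ℤ a) →+ ℚ where
  toFun := coefAt a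
  map_zero' := by
    have : coefAt a (0 : ↥(pureGen ℤ a)) = ((0 : ℤ) : ℚ) / ((1 : ℤ) : ℚ) :=
      coef_eq ha 0 one_ne_zero (by simp)
    simpa using this
  map_add' := by
    intro y z
    obtain ⟨r₁, hr₁, s₁, h₁⟩ := mem_pureGen.mp y.2
    obtain ⟨r₂, hr₂, s₂, h₂⟩ := mem_pureGen.mp z.2
    have hadd : (r₁ * r₂) • ((y + z : ↥(pureGen ℤ a)) : M) = (r₂ * s₁ + r₁ * s₂) • a := by
      have hco : ((y + z : ↥(pureGen ℤ a)) : M) = (y : M) + (z : M) := rfl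
      rw [hco, smul_add, add_smul]
      congr 1
      · rw [mul_comm, ← smul_smul, h₁, smul_smul]
      · rw [← smul_smul, h₂, smul_smul]
    show coefAt a (y + z) = coefAt a y + coefAt a z
    rw [show coefAt a (y + z) = _ from coef_eq ha (y + z) (mul_ne_zero hr₁ hr₂) hadd,
      coef_eq ha y hr₁ h₁, coef_eq ha z hr₂ h₂]
    have c₁ : (r₁ : ℚ) ≠ 0 := by exact_mod_cast hr₁
    have c₂ : (r₂ : ℚ) ≠ 0 := by exact_mod_cast hr₂
    push_cast
    field_simp

theorem coefHom_apply {a : M} (ha : a ≠ 0) (y : ↥(pureGen ℤ a)) :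
    coefHom a ha y = coefAt a y := rfl

theorem coefHom_injective {a : M} (ha : a ≠ 0) : Function.Injective (coefHom a ha) := by
  rw [injective_iff_map_eq_zero]
  intro y hy
  obtain ⟨r, hr, s, h⟩ := mem_pureGen.mp y.2
  have hc : coefAt a y = (s : ℚ) / (r : ℚ) := coef_eq ha y hr h
  rw [coefHom_apply, hc] at hy
  have hs : s = 0 := by
    rcases div_eq_zero_iff.mp hy with h' | h'
    · exact_mod_cast h'
    · exact absurd h' (by exact_mod_cast hr)
  have h0 : r • (y : M) = 0 := by rw [h, hs, zero_smul]
  ext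
  simpa using (eq_zero_or_eq_zero_of_smul_eq_zero h0).resolve_left hr

theorem coefHom_self {a : M} (ha : a ≠ 0) :
    coefHom a ha ⟨a, self_mem_pureGen a⟩ = 1 := by
  have : coefAt a ⟨a, self_mem_pureGen a⟩ = ((1 : ℤ) : ℚ) / ((1 : ℤ) : ℚ) :=
    coef_eq ha _ one_ne_zero rfl
  rw [coefHom_apply]
  simpa using this

end Coef

/-! ### subgroups of `ℚ` -/

section RatSubgroup

theorem int_mul_mem (A : AddSubgroup ℚ) {a : ℚ} (ha : a ∈ A) (z : ℤ) : (z : ℚ) * a ∈ A := by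
  rw [← zsmul_eq_mul]; exact zsmul_mem ha z

theorem nat_mul_mem (A : AddSubgroup ℚ) {a : ℚ} (ha : a ∈ A) (n : ℕ) : (n : ℚ) * a ∈ A := by
  have := int_mul_mem A ha (n : ℤ)
  push_cast at this
  exact this

/-- every hom from a subgroup of ℚ to ℚ is multiplication by a rational -/
theorem exists_rat_mul (A : AddSubgroup ℚ) (f : A →+ ℚ) :
    ∃ q : ℚ, ∀ a : A, f a = q * (a : ℚ) := by
  by_cases h : ∀ a : A, (a : ℚ) = 0
  · refine ⟨0, fun a => ?_⟩
    have : a = 0 := Subtype.ext (h a)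
    rw [this, map_zero, zero_mul]
  · push_neg at h
    obtain ⟨a0, ha0⟩ := h
    refine ⟨f a0 / (a0 : ℚ), fun a => ?_⟩
    by_cases haz : (a : ℚ) = 0
    · have : a = 0 := Subtype.ext haz
      rw [this, map_zero]
      simp
    · set c : ℚ := (a : ℚ) / (a0 : ℚ) with hc
      have hdenz : ((c.den : ℚ)) ≠ 0 := by exact_mod_cast c.den_nz
      have hkey : ((c.den : ℚ)) * (a : ℚ) = (c.num : ℚ) * (a0 : ℚ) := by
        have hcc : ((c.num : ℚ)) / ((c.den : ℚ)) = c := Rat.num_div_den c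
        rw [hc, div_eq_div_iff hdenz ha0] at hcc
        linarith [hcc]
      have hsub : ((c.den : ℤ) • a : A) = ((c.num : ℤ) • a0 : A) := by
        apply Subtype.ext
        push_cast
        rw [zsmul_eq_mul, zsmul_eq_mul]
        push_cast
        exact hkey
      have happ : ((c.den : ℤ)) • f a = ((c.num : ℤ)) • f a0 := by
        rw [← map_zsmul, ← map_zsmul, hsub]
      rw [zsmul_eq_mul, zsmul_eq_mul] at happ
      rw [div_mul_eq_mul_div, eq_div_iff ha0]
      have hd : ((c.den : ℚ)) * ((f a) * (a0 : ℚ)) = ((c.den : ℚ)) * (f a0 * (a : ℚ)) := by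
        have h1 : ((c.den : ℚ)) * (f a) = (c.num : ℚ) * f a0 := by push_cast at happ ⊢; linarith
        calc ((c.den : ℚ)) * ((f a) * (a0 : ℚ)) = (((c.den : ℚ)) * (f a)) * (a0 : ℚ) := by ring
          _ = ((c.num : ℚ) * f a0) * (a0 : ℚ) := by rw [h1]
          _ = f a0 * ((c.num : ℚ) * (a0 : ℚ)) := by ring
          _ = f a0 * (((c.den : ℚ)) * (a : ℚ)) := by rw [← hkey]
          _ = ((c.den : ℚ)) * (f a0 * (a : ℚ)) := by ring
      exact mul_left_cancel₀ hdenz hd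

/-- prime step: a subgroup squeezed between pC and C is C or pC -/
theorem prime_squeeze {p : ℕ} (hp : p.Prime) (C B : AddSubgroup ℚ) (hBC : B ≤ C)
    (h : ∀ c ∈ C, (p : ℚ) * c ∈ B) :
    B = C ∨ ∀ r : ℚ, r ∈ B ↔ ∃ c ∈ C, r = (p : ℚ) * c := by
  have hpZ : Prime (p : ℤ) := Nat.prime_iff_prime_int.mp hp
  by_cases hB : ∀ b ∈ B, ∃ c ∈ C, b = (p : ℚ) * c
  · exact Or.inr fun r => ⟨fun hr => hB r hr, fun ⟨c, hc, hrc⟩ => hrc ▸ h c hc⟩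
  · left
    push_neg at hB
    obtain ⟨b0, hb0B, hb0⟩ := hB
    have hb0C : b0 ∈ C := hBC hb0B
    have hb0ne : b0 ≠ 0 := by
      rintro rfl
      exact hb0 0 C.zero_mem (by ring)
    apply le_antisymm hBC
    intro a haC
    by_cases ha0 : a = 0
    · rw [ha0]; exact B.zero_mem
    · set t : ℚ := a / b0 with ht
      have htne : t ≠ 0 := div_ne_zero ha0 hb0ne
      have hnum : t.num ≠ 0 := Rat.num_ne_zero.mpr htne
      have hrel : ((t.den : ℚ)) * a = (t.num : ℚ) * b0 := by
        have hcc : ((t.num : ℚ)) / ((t.den : ℚ)) = t := Rat.num_div_den t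
        rw [ht, div_eq_div_iff (by exact_mod_cast t.den_nz) hb0ne] at hcc
        linarith [hcc]
      by_cases hpden : (p : ℤ) ∣ (t.den : ℤ)
      · -- contradiction : b0 ∈ pC
        exfalso
        obtain ⟨n₂, hn₂⟩ := hpden
        have hpnum : ¬ ((p : ℤ) ∣ t.num) := by
          intro hd
          have hg : (p : ℤ) ∣ (Int.gcd t.num (t.den : ℤ) : ℤ) := Int.dvd_coe_gcd hd ⟨n₂, hn₂⟩
          have : Int.gcd t.num (t.den : ℤ) = 1 := by
            simpa [Int.gcd] using t.reduced
          rw [this] at hg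
          exact hp.one_lt.ne' (by exact_mod_cast Int.eq_one_of_dvd_one (by positivity) hg)
        obtain ⟨u, v, huv⟩ := (hpZ.coprime_iff_not_dvd.mpr hpnum)
        refine hb0 ((u : ℚ) * b0 + (v : ℚ) * ((n₂ : ℚ) * a)) ?_ ?_
        · exact C.add_mem (int_mul_mem C hb0C u) (int_mul_mem C (int_mul_mem C haC n₂) v)
        · have hd : ((t.den : ℚ)) = (p : ℚ) * (n₂ : ℚ) := by exact_mod_cast hn₂
          have h1 : (v : ℚ) * ((t.num : ℚ) * b0) = (p : ℚ) * ((v : ℚ) * ((n₂ : ℚ) * a)) := by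
            rw [← hrel, hd]; ring
          have huv' : (u : ℚ) * (p : ℚ) + (v : ℚ) * (t.num : ℚ) = 1 := by exact_mod_cast huv
          calc b0 = ((u : ℚ) * (p : ℚ) + (v : ℚ) * (t.num : ℚ)) * b0 := by rw [huv', one_mul]
            _ = (p : ℚ) * ((u : ℚ) * b0) + (v : ℚ) * ((t.num : ℚ) * b0) := by ring
            _ = (p : ℚ) * ((u : ℚ) * b0) + (p : ℚ) * ((v : ℚ) * ((n₂ : ℚ) * a)) := by rw [h1]
            _ = (p : ℚ) * ((u : ℚ) * b0 + (v : ℚ) * ((n₂ : ℚ) * a)) := by ring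
      · obtain ⟨u, v, huv⟩ := (hpZ.coprime_iff_not_dvd.mpr hpden)
        have huv' : (u : ℚ) * (p : ℚ) + (v : ℚ) * (t.den : ℚ) = 1 := by exact_mod_cast huv
        have hmem1 : (p : ℚ) * ((u : ℚ) * a) ∈ B := h _ (int_mul_mem C haC u)
        have hmem2 : ((v * t.num : ℤ) : ℚ) * b0 ∈ B := int_mul_mem B hb0B _
        have : a = (p : ℚ) * ((u : ℚ) * a) + ((v * t.num : ℤ) : ℚ) * b0 := by
          push_cast
          calc a = ((u : ℚ) * (p : ℚ) + (v : ℚ) * (t.den : ℚ)) * a := by rw [huv', one_mul]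
            _ = (p : ℚ) * ((u : ℚ) * a) + (v : ℚ) * ((t.den : ℚ) * a) := by ring
            _ = (p : ℚ) * ((u : ℚ) * a) + (v : ℚ) * ((t.num : ℚ) * b0) := by rw [hrel]
            _ = (p : ℚ) * ((u : ℚ) * a) + (v : ℚ) * (t.num : ℚ) * b0 := by ring
        rw [this]
        exact B.add_mem hmem1 hmem2

theorem sandwich_nat (n : ℕ) : n ≠ 0 → ∀ A B : AddSubgroup ℚ, B ≤ A →
    (∀ a ∈ A, (n : ℚ) * a ∈ B) →
    ∃ q : ℚ, q ≠ 0 ∧ ∀ r : ℚ, r ∈ B ↔ ∃ a ∈ A, r = q * a := by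
  induction n using UniqueFactorizationMonoid.induction_on_prime with
  | h₁ => intro h; exact absurd rfl h
  | h₂ x hx =>
    intro _ A B hBA h
    have hx1 : x = 1 := Nat.isUnit_iff.mp hx
    refine ⟨1, one_ne_zero, fun r => ⟨fun hr => ⟨r, hBA hr, (one_mul r).symm⟩, ?_⟩⟩
    rintro ⟨a, ha, rfl⟩
    have := h a ha
    rw [hx1] at this
    push_cast at this
    rwa [one_mul] at this ⊢
  | h₃ a p ha hp ih =>
    intro _ A B hBA h
    have hpn : p.Prime := Nat.prime_iff.mpr hp
    set C : AddSubgroup ℚ := B ⊔ AddSubgroup.map (AddMonoidHom.mulLeft ((a : ℕ) : ℚ)) A with hC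
    have hCA : C ≤ A := by
      rw [hC]
      apply sup_le hBA
      rintro r ⟨x, hx, rfl⟩
      exact nat_mul_mem A hx a
    have hAC : ∀ x ∈ A, ((a : ℕ) : ℚ) * x ∈ C := fun x hx =>
      AddSubgroup.mem_sup_right (AddSubgroup.mem_map_of_mem _ hx)
    obtain ⟨q, hq0, hq⟩ := ih ha A C hCA hAC
    have hpC : ∀ c ∈ C, ((p : ℕ) : ℚ) * c ∈ B := by
      intro c hc
      rw [hC, AddSubgroup.mem_sup] at hc
      obtain ⟨b, hb, z, hz, rfl⟩ := hc
      obtain ⟨x, hxA, rfl⟩ := AddSubgroup.mem_map.mp hz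
      have h1 : ((p : ℕ) : ℚ) * b ∈ B := nat_mul_mem B hb p
      have h2 : ((p * a : ℕ) : ℚ) * x ∈ B := h x hxA
      have : ((p : ℕ) : ℚ) * (b + AddMonoidHom.mulLeft ((a : ℕ) : ℚ) x) =
          ((p : ℕ) : ℚ) * b + ((p * a : ℕ) : ℚ) * x := by
        simp only [AddMonoidHom.coe_mulLeft]
        push_cast
        ring
      rw [this]
      exact B.add_mem h1 h2
    rcases prime_squeeze hpn C B le_sup_left hpC with hBC | hdescr
    · exact ⟨q, hq0, by rw [hBC]; exact hq⟩
    · refine ⟨(p : ℚ) * q, mul_ne_zero (by exact_mod_cast hpn.ne_zero) hq0, fun r => ?_⟩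
      rw [hdescr r]
      constructor
      · rintro ⟨c, hc, rfl⟩
        obtain ⟨x, hx, rfl⟩ := (hq c).mp hc
        exact ⟨x, hx, by ring⟩
      · rintro ⟨x, hx, rfl⟩
        exact ⟨q * x, (hq _).mpr ⟨x, hx, rfl⟩, by ring⟩

theorem sandwich_int (n : ℤ) (hn : n ≠ 0) (A B : AddSubgroup ℚ) (hBA : B ≤ A)
    (h : ∀ a ∈ A, (n : ℚ) * a ∈ B) :
    ∃ q : ℚ, q ≠ 0 ∧ ∀ r : ℚ, r ∈ B ↔ ∃ a ∈ A, r = q * a := by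
  apply sandwich_nat n.natAbs (Int.natAbs_ne_zero.mpr hn) A B hBA
  intro x hx
  have habs : ((n.natAbs : ℕ) : ℚ) = ((|n| : ℤ) : ℚ) := Nat.cast_natAbs n
  rcases abs_choice n with h' | h'
  · rw [habs, h']; exact h x hx
  · rw [habs, h']; push_cast; rw [neg_mul]; exact B.neg_mem (h x hx)

noncomputable def descrEquiv (A B : AddSubgroup ℚ) (q : ℚ) (hq : q ≠ 0)
    (h : ∀ r : ℚ, r ∈ B ↔ ∃ a ∈ A, r = q * a) : B ≃+ A where
  toFun b := ⟨q⁻¹ * b, by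
    obtain ⟨a, ha, hab⟩ := (h b).mp b.2
    rw [hab, inv_mul_cancel_left₀ hq]; exact ha⟩
  invFun a := ⟨q * a, (h _).mpr ⟨a, a.2, rfl⟩⟩
  left_inv b := Subtype.ext (by simp [mul_inv_cancel_left₀ hq])
  right_inv a := Subtype.ext (by simp [inv_mul_cancel_left₀ hq])
  map_add' b c := Subtype.ext (by push_cast; ring)

theorem chainLe (T : ℤ → AddSubgroup ℚ)
    (hchain : ∀ k, ∃ f : T k →+ T (k + 1), Function.Injective f) :
    ∀ k j : ℤ, k ≤ j → ∃ f : ↥(T k) →+ ↥(T j), Function.Injective f := by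
  intro k j hkj
  refine Int.le_induction (motive := fun j _ => ∃ f : ↥(T k) →+ ↥(T j), Function.Injective f)
    ?_ ?_ j hkj
  · exact ⟨AddMonoidHom.id _, fun _ _ h => h⟩
  · rintro j _ ⟨f, hf⟩
    obtain ⟨g, hg⟩ := hchain j
    exact ⟨g.comp f, hg.comp hf⟩

end RatSubgroup

/-- Let `G = ⊕_{k ∈ ℤ} G k` where each `G k` is torsion-free
and homogeneous of type `τ_k` (encoded by rank-1 subgroups `T k ≤ ℚ`: the pure
subgroup of every nonzero element of `G k` is isomorphic to `T k`), the types
`τ_k` form a strictly increasing chain, and for each `k` every rank-1 group of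
type `τ_k` is a surjective image of `G (k-1)`.  Then `G` is a
self-pure-generator. -/
theorem stmt15 (G : ℤ → Type u) [∀ k, AddCommGroup (G k)]
    [∀ k, NoZeroSMulDivisors ℤ (G k)]
    (T : ℤ → AddSubgroup ℚ) (hT0 : ∀ k, T k ≠ ⊥)
    (hchain : ∀ k, ∃ f : T k →+ T (k + 1), Function.Injective f)
    (hstrict : ∀ k, ¬ ∃ f : T (k + 1) →+ T k, Function.Injective f)
    (hhomog : ∀ k, ∀ g : G k, g ≠ 0 → Nonempty ((pureGen ℤ g) ≃+ T k))
    (hsurj : ∀ (k : ℤ) (X : Type u) [AddCommGroup X], Nonempty (X ≃+ T k) →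
      ∃ f : G (k - 1) →+ X, Function.Surjective f) :
    SelfPureGenerator ℤ (Π₀ k, G k) := by
  classical
  haveI hNZ : NoZeroSMulDivisors ℤ (Π₀ k, G k) := by
    constructor
    intro r y h
    by_cases hr : r = 0
    · exact Or.inl hr
    · refine Or.inr (DFinsupp.ext fun j => ?_)
      have hj : (r • y) j = r • y j := DFinsupp.smul_apply _ _ _
      rw [h] at hj
      have h0 : r • y j = 0 := by simpa using hj.symm
      exact (eq_zero_or_eq_zero_of_smul_eq_zero h0).resolve_left hr
  intro K hK
  have main : ∀ y : ↥K, ∃ φ : (Π₀ k, G k) →ₗ[ℤ] ↥K, y ∈ LinearMap.range φ := by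
    intro y
    by_cases hy0 : (y : Π₀ k, G k) = 0
    · refine ⟨0, 0, ?_⟩
      apply Subtype.ext
      simpa using hy0.symm
    · set x : Π₀ k, G k := (y : Π₀ k, G k) with hx
      have hxne : x ≠ 0 := hy0
      have hsupp : x.support.Nonempty := by
        rw [Finset.nonempty_iff_ne_empty]
        intro hemp
        exact hxne (by rwa [DFinsupp.support_eq_empty] at hemp)
      set k := x.support.min' hsupp with hkdef
      have hkmem : k ∈ x.support := x.support.min'_mem hsupp
      have hxk : x k ≠ 0 := DFinsupp.mem_support_iff.mp hkmem
      set Qx : AddSubgroup ℚ := (coefHom x hxne).range with hQx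
      have hxj : ∀ j : {j // j ∈ x.support}, x j.1 ≠ 0 := fun j =>
        DFinsupp.mem_support_iff.mp j.2
      set Q : {j // j ∈ x.support} → AddSubgroup ℚ :=
        fun j => (coefHom (x j.1) (hxj j)).range with hQ
      set kS : {j // j ∈ x.support} := ⟨k, hkmem⟩ with hkS
      -- claim 1 : the coefficient of any element of the pure hull of x lies in every Q j
      have claim1 : ∀ (j : {j // j ∈ x.support}) (z : ↥(pureGen ℤ x)),
          coefHom x hxne z ∈ Q j := by
        intro j z
        obtain ⟨r, hr, s, hrel⟩ := mem_pureGen.mp z.2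
        have hcz : coefHom x hxne z = (s : ℚ) / (r : ℚ) := coef_eq hxne z hr hrel
        have hcomp : r • ((z : Π₀ i, G i) j.1) = s • x j.1 := by
          have := congrArg (fun t => t j.1) hrel
          simpa [DFinsupp.smul_apply] using this
        have hmem : ((z : Π₀ i, G i) j.1) ∈ pureGen ℤ (x j.1) := ⟨r, hr, s, hcomp⟩
        refine ⟨⟨_, hmem⟩, ?_⟩
        rw [show coefHom (x j.1) (hxj j) ⟨_, hmem⟩ = (s : ℚ) / (r : ℚ) from
          coef_eq (hxj j) ⟨_, hmem⟩ hr hcomp, hcz]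
      -- claim 2 : any rational lying in all the Q j is the coefficient of an element
      have claim2 : ∀ q : ℚ, (∀ j : {j // j ∈ x.support}, q ∈ Q j) → q ∈ Qx := by
        intro q hq
        have hr : (q.den : ℤ) ≠ 0 := by exact_mod_cast q.den_nz
        have hqrs : q = ((q.num : ℤ) : ℚ) / ((q.den : ℤ) : ℚ) := by
          push_cast
          exact (Rat.num_div_den q).symm
        choose w hw using fun j => hq j
        have hrel : ∀ j : {j // j ∈ x.support},
            (q.den : ℤ) • ((w j : G j.1)) = q.num • x j.1 := by
          intro j
          refine smul_of_coef (hxj j) (w j) hr ?_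
          rw [← coefHom_apply (hxj j), hw j]
          exact hqrs
        set yv : Π₀ i, G i :=
          ∑ j ∈ x.support.attach, DFinsupp.single j.1 ((w j : G j.1)) with hyv
        have hsmul : (q.den : ℤ) • yv = q.num • x := by
          have hxsum : ∑ j ∈ x.support.attach, DFinsupp.single j.1 (x j.1) = x := by
            rw [Finset.sum_attach x.support (fun j => DFinsupp.single j (x j))]
            exact DFinsupp.sum_single
          have hlhs : (q.den : ℤ) • yv =
              ∑ j ∈ x.support.attach, DFinsupp.single j.1 (q.num • x j.1) := by
            rw [hyv, Finset.smul_sum]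
            apply Finset.sum_congr rfl
            intro j _
            rw [← DFinsupp.single_smul, hrel j]
          have hrhs : q.num • x =
              ∑ j ∈ x.support.attach, DFinsupp.single j.1 (q.num • x j.1) := by
            have : q.num • x = q.num • ∑ j ∈ x.support.attach, DFinsupp.single j.1 (x j.1) := by
              rw [hxsum]
            rw [this, Finset.smul_sum]
            apply Finset.sum_congr rfl
            intro j _
            rw [← DFinsupp.single_smul]
          rw [hlhs, hrhs]
        have hmem : yv ∈ pureGen ℤ x := ⟨(q.den : ℤ), hr, q.num, hsmul⟩
        refine ⟨⟨yv, hmem⟩, ?_⟩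
        rw [coefHom_apply, coef_eq hxne ⟨yv, hmem⟩ hr hsmul]
        exact hqrs.symm
      have hQxQk : Qx ≤ Q kS := by
        rintro q ⟨z, rfl⟩
        exact claim1 kS z
      -- multipliers from embeddings of types
      have hmul : ∀ j : {j // j ∈ x.support}, ∃ n : ℤ, n ≠ 0 ∧
          ∀ a ∈ Q kS, (n : ℚ) * a ∈ Q j := by
        intro j
        have hkj : k ≤ j.1 := x.support.min'_le j.1 j.2
        obtain ⟨c, hc⟩ := chainLe T hchain k j.1 hkj
        let e1 : ↥(Q kS) ≃+ ↥(pureGen ℤ (x kS.1)) :=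
          (AddMonoidHom.ofInjective (coefHom_injective (hxj kS))).symm
        let e2 : ↥(pureGen ℤ (x kS.1)) ≃+ ↥(T k) := (hhomog k (x kS.1) (hxj kS)).some
        let e4 : ↥(T j.1) ≃+ ↥(pureGen ℤ (x j.1)) := (hhomog j.1 (x j.1) (hxj j)).some.symm
        let F : ↥(Q kS) →+ ℚ :=
          ((coefHom (x j.1) (hxj j)).comp
            ((e4.toAddMonoidHom.comp c).comp
              (e2.toAddMonoidHom.comp e1.toAddMonoidHom)))
        have hFmem : ∀ a : ↥(Q kS), F a ∈ Q j := fun a => ⟨_, rfl⟩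
        have hFinj : Function.Injective F := by
          have hco : ⇑F = ⇑(coefHom (x j.1) (hxj j)) ∘ ⇑e4 ∘ ⇑c ∘ ⇑e2 ∘ ⇑e1 := by
            funext a
            simp [F, AddMonoidHom.comp_apply]
          rw [hco]
          exact (coefHom_injective (hxj j)).comp (e4.injective.comp (hc.comp
            (e2.injective.comp e1.injective)))
        obtain ⟨qj, hqj⟩ := exists_rat_mul (Q kS) F
        have h1mem : (1 : ℚ) ∈ Q kS := ⟨⟨x kS.1, self_mem_pureGen _⟩, coefHom_self (hxj kS)⟩
        have hqj0 : qj ≠ 0 := by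
          intro h0
          have ha1 : (⟨1, h1mem⟩ : ↥(Q kS)) ≠ 0 := by
            intro hcon
            have := congrArg (Subtype.val) hcon
            simpa using this
          have : F ⟨1, h1mem⟩ = 0 := by rw [hqj ⟨1, h1mem⟩, h0, zero_mul]
          exact ha1 (hFinj (by rw [this, map_zero]))
        refine ⟨qj.num, Rat.num_ne_zero.mpr hqj0, fun a haQ => ?_⟩
        have hqd : ((qj.den : ℚ)) * qj = ((qj.num : ℤ) : ℚ) := by
          push_cast
          rw [mul_comm]
          field_simp [Rat.num_div_den]
          rw [Rat.mul_den_eq_num]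
        have : ((qj.num : ℤ) : ℚ) * a = (qj.den : ℚ) * (qj * a) := by
          rw [← mul_assoc, hqd]
        rw [this]
        have : qj * a ∈ Q j := by
          rw [← hqj ⟨a, haQ⟩]
          exact hFmem ⟨a, haQ⟩
        exact nat_mul_mem (Q j) this qj.den
      choose nf hnf using hmul
      set N : ℤ := ∏ j ∈ x.support.attach, nf j with hN
      have hN0 : N ≠ 0 := Finset.prod_ne_zero_iff.mpr fun j _ => (hnf j).1
      have hNmem : ∀ a ∈ Q kS, (N : ℚ) * a ∈ Qx := by
        intro a ha
        apply claim2
        intro j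
        have hsplit : N = (∏ i ∈ x.support.attach.erase j, nf i) * nf j :=
          (Finset.prod_erase_mul _ _ (Finset.mem_attach _ j)).symm
        have heq : (N : ℚ) * a =
            ((∏ i ∈ x.support.attach.erase j, nf i : ℤ) : ℚ) * ((nf j : ℚ) * a) := by
          rw [hsplit]; push_cast; ring
        rw [heq]
        exact int_mul_mem (Q j) ((hnf j).2 a ha) _
      obtain ⟨qq, hqq0, hdesc⟩ := sandwich_int N hN0 (Q kS) Qx hQxQk hNmem
      let eQ : ↥Qx ≃+ ↥(Q kS) := descrEquiv (Q kS) Qx qq hqq0 hdesc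
      let efinal : ↥(pureGen ℤ x) ≃+ ↥(T k) :=
        ((AddMonoidHom.ofInjective (coefHom_injective hxne)).trans eQ).trans
          (((AddMonoidHom.ofInjective (coefHom_injective (hxj kS))).symm).trans
            (hhomog k (x kS.1) (hxj kS)).some)
      obtain ⟨f, hf⟩ := hsurj k (↥(pureGen ℤ x)) ⟨efinal⟩
      have hpureK : pureGen ℤ x ≤ K := by
        intro z hz
        obtain ⟨r, hr, s, hrel⟩ := mem_pureGen.mp hz
        have hrz : r • z ∈ K := by
          rw [hrel]
          exact K.smul_mem s y.2
        exact hK r z hr hrz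
      let φ0 : (Π₀ j, G j) →+ ↥K :=
        { toFun := fun g => ⟨(f (g (k - 1)) : Π₀ j, G j), hpureK (f (g (k - 1))).2⟩
          map_zero' := by
            apply Subtype.ext
            show ((f ((0 : Π₀ j, G j) (k - 1)) : ↥(pureGen ℤ x)) : Π₀ j, G j) = 0
            rw [DFinsupp.zero_apply, map_zero]
            rfl
          map_add' := by
            intro g1 g2
            apply Subtype.ext
            show ((f ((g1 + g2) (k - 1)) : ↥(pureGen ℤ x)) : Π₀ j, G j) = _
            rw [DFinsupp.add_apply, map_add]
            rfl }
      refine ⟨φ0.toIntLinearMap, ?_⟩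
      obtain ⟨g0, hg0⟩ := hf ⟨x, self_mem_pureGen x⟩
      refine ⟨DFinsupp.single (k - 1) g0, ?_⟩
      apply Subtype.ext
      show ((f ((DFinsupp.single (k - 1) g0) (k - 1)) : ↥(pureGen ℤ x)) : Π₀ j, G j) = (y : _)
      rw [DFinsupp.single_eq_same, hg0]
  choose φ hφ using main
  refine ⟨↥K, Finsupp.lsum ℕ φ, fun z => ?_⟩
  obtain ⟨g, hg⟩ := hφ z
  exact ⟨Finsupp.single z g, by rw [Finsupp.lsum_single]; exact hg⟩
end

section
/- Let (τ_k)_{k∈ℤ} be a strictly increasing chain of types, and let G = ⊕_{k∈ℤ} G_k where each G_k is an indecomposable torsion-free abelian group of rank 2, homogeneous of type τ_k, with endomorphism ring in which every nonzero endomorphism is injective. Then G has no direct summand of rank 1. -/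
open TensorProduct

universe u

/-- Let `(τ_k)_{k ∈ ℤ}` be a strictly increasing chain of
types (represented by rank-1 subgroups `T k ≤ ℚ`) and `G = ⊕_{k ∈ ℤ} G k`, where
each `G k` is an indecomposable torsion-free group of rank `2`, homogeneous of
type `τ_k`, all of whose nonzero endomorphisms are injective.  Then `G` has no
rank-1 direct summand. -/
theorem stmt16 (G : ℤ → Type u) [∀ k, AddCommGroup (G k)]
    [∀ k, NoZeroSMulDivisors ℤ (G k)]
    (T : ℤ → AddSubgroup ℚ) (hT0 : ∀ k, T k ≠ ⊥)
    (hchain : ∀ k, ∃ f : T k →+ T (k + 1), Function.Injective f)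
    (hstrict : ∀ k, ¬ ∃ f : T (k + 1) →+ T k, Function.Injective f)
    (hrk : ∀ k, Module.rank ℤ (G k) = 2)
    (hindec : ∀ k, ∀ U V : Submodule ℤ (G k), IsCompl U V → U = ⊥ ∨ V = ⊥)
    (hhomog : ∀ k, ∀ g : G k, g ≠ 0 → Nonempty ((pureGen ℤ g) ≃+ T k))
    (hendo : ∀ k, ∀ f : G k →ₗ[ℤ] G k, f ≠ 0 → Function.Injective f) :
    ¬ ∃ A B : Submodule ℤ (Π₀ k, G k), IsCompl A B ∧ Module.rank ℤ A = 1 := by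
  classical
  rintro ⟨A, B, hAB, hrkA⟩
  -- the big module is torsion-free
  haveI htfM : NoZeroSMulDivisors ℤ (Π₀ k, G k) := ⟨fun {r x} h => by
    by_cases hr : r = 0
    · exact Or.inl hr
    · refine Or.inr (DFinsupp.ext fun k => ?_)
      have hk : r • x k = 0 := by
        rw [← DFinsupp.smul_apply, h, DFinsupp.zero_apply]
      exact (smul_eq_zero.mp hk).resolve_left hr⟩
  -- chain of injections upwards, and no injections downwards
  have hup : ∀ j k : ℤ, j ≤ k → ∃ f : T j →+ T k, Function.Injective f := by
    intro j k hjk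
    refine Int.le_induction (motive := fun k _ => ∃ f : T j →+ T k, Function.Injective f) ?_ ?_ k hjk
    · exact ⟨AddMonoidHom.id _, fun _ _ h => h⟩
    · rintro n hn ⟨f, hf⟩
      obtain ⟨g, hg⟩ := hchain n
      exact ⟨g.comp f, hg.comp hf⟩
  have hno : ∀ j k : ℤ, j < k → ∀ f : T k →+ T j, ¬ Function.Injective f := by
    intro j k hjk f hf
    obtain ⟨g, hg⟩ := hup (j + 1) k (by omega)
    exact hstrict j ⟨f.comp g, hf.comp hg⟩
  -- pick a nonzero element of A
  have hA0 : ∃ x : A, x ≠ 0 := by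
    rw [← rank_pos_iff_exists_ne_zero (R := ℤ), hrkA]
    exact zero_lt_one
  obtain ⟨a0, ha0⟩ := hA0
  set a : Π₀ k, G k := (a0 : Π₀ k, G k) with ha_def
  have haA : a ∈ A := a0.2
  have ha : a ≠ 0 := fun h => ha0 (Subtype.ext h)
  -- every element of A is rationally dependent on a
  have hdep : ∀ z : A, ∃ r : ℤ, r ≠ 0 ∧ ∃ s : ℤ, r • (z : Π₀ k, G k) = s • a := by
    intro z
    by_contra hcon
    push_neg at hcon
    have hli : LinearIndependent ℤ ![a0, z] := by
      rw [LinearIndependent.pair_iff]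
      intro s t hst
      by_cases ht : t = 0
      · subst ht
        refine ⟨?_, rfl⟩
        have h1 : s • a0 = 0 := by simpa using hst
        exact (smul_eq_zero.mp h1).resolve_right ha0
      · exfalso
        refine hcon t ht (-s) ?_
        have := congrArg (Subtype.val) hst
        simp only [Submodule.coe_add, Submodule.coe_smul, Submodule.coe_zero] at this
        have : t • (z : Π₀ k, G k) = -(s • a) := by
          rw [eq_neg_iff_add_eq_zero, add_comm]
          exact this
        rw [this, neg_smul]
    have h2 := hli.cardinal_lift_le_rank
    rw [hrkA] at h2
    simp at h2
  -- the support of a and its minimum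
  have hsne : a.support.Nonempty := by
    rw [Finset.nonempty_iff_ne_empty]
    intro h
    exact ha (DFinsupp.support_eq_empty.mp h)
  set m : ℤ := a.support.min' hsne with hm_def
  have ham : a m ≠ 0 := DFinsupp.mem_support_iff.mp (a.support.min'_mem hsne)
  -- projection onto A
  set π : (Π₀ k, G k) →ₗ[ℤ] A := A.linearProjOfIsCompl B hAB with hπ_def
  set φ : ∀ k, G k →ₗ[ℤ] A := fun k => π ∘ₗ DFinsupp.lsingle k with hφ_def
  -- coordinate m of any element of A lies in pureGen (a m), and vanishing at m forces 0
  have hcoord : ∀ z : A, (z : Π₀ k, G k) m ∈ pureGen ℤ (a m) := by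
    intro z
    obtain ⟨r, hr, s, hrs⟩ := hdep z
    exact ⟨r, hr, s, by
      have := congrArg (fun w : Π₀ k, G k => w m) hrs
      simpa using this⟩
  have hzerocoord : ∀ z : A, (z : Π₀ k, G k) m = 0 → z = 0 := by
    intro z hz
    obtain ⟨r, hr, s, hrs⟩ := hdep z
    have h1 : s • a m = 0 := by
      have := congrArg (fun w : Π₀ k, G k => w m) hrs
      simp only [DFinsupp.smul_apply, hz, smul_zero] at this
      exact this.symm
    have hs : s = 0 := (smul_eq_zero.mp h1).resolve_right ham
    rw [hs, zero_smul] at hrs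
    have := (smul_eq_zero.mp hrs).resolve_left hr
    exact Subtype.ext this
  -- the maps φ k vanish on a k for k in the support, k ≠ m
  have hvanish : ∀ k ∈ a.support, k ≠ m → φ k (a k) = 0 := by
    intro k hk hkm
    by_contra hne
    have hmk : m < k := lt_of_le_of_ne (a.support.min'_le k hk) (Ne.symm hkm)
    set g : G k := a k with hg_def
    have hg : g ≠ 0 := DFinsupp.mem_support_iff.mp hk
    -- build an injective additive hom pureGen g →+ pureGen (a m)
    have hmap : ∃ h : (pureGen ℤ g) →+ (pureGen ℤ (a m)), Function.Injective h := by
      refine ⟨{ toFun := fun y => ⟨((φ k y : A) : Π₀ i, G i) m, hcoord _⟩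
                map_zero' := ?_
                map_add' := ?_ }, ?_⟩
      · ext
        simp
      · intro y z
        ext
        simp
      · rw [injective_iff_map_eq_zero]
        intro y hy
        have hy' : ((φ k (y : G k) : A) : Π₀ i, G i) m = 0 := by
          have := congrArg Subtype.val hy
          simpa using this
        have hfz : φ k (y : G k) = 0 := hzerocoord _ hy'
        obtain ⟨r, hr, s, hrs⟩ := y.2
        have h1 : s • ((φ k g : A) : Π₀ i, G i) = 0 := by
          have h2 : φ k (r • (y : G k)) = φ k (s • g) := by rw [hrs]
          rw [map_smul, map_smul, hfz, smul_zero] at h2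
          have := congrArg Subtype.val h2.symm
          simpa using this
        have hfg : ((φ k g : A) : Π₀ i, G i) ≠ 0 := fun h =>
          hne (Subtype.ext h)
        have hs : s = 0 := (smul_eq_zero.mp h1).resolve_right hfg
        rw [hs, zero_smul] at hrs
        have : (y : G k) = 0 := (smul_eq_zero.mp hrs).resolve_left hr
        exact Subtype.ext this
    obtain ⟨h, hinj⟩ := hmap
    obtain ⟨e1⟩ := hhomog k g hg
    obtain ⟨e2⟩ := hhomog m (a m) ham
    exact hno m k hmk (e2.toAddMonoidHom.comp (h.comp e1.symm.toAddMonoidHom))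
      (e2.injective.comp (hinj.comp e1.symm.injective))
  -- decompose a0 through the single maps
  have hsum : a0 = ∑ k ∈ a.support, φ k (a k) := by
    have h1 : a0 = π a := (Submodule.linearProjOfIsCompl_apply_left hAB a0).symm
    have h2 : a = ∑ k ∈ a.support, DFinsupp.single k (a k) := by
      conv_lhs => rw [← DFinsupp.sum_single (f := a)]
      rfl
    rw [h1]
    conv_lhs => rw [h2]
    rw [map_sum]
    rfl
  have hkey : a0 = φ m (a m) := by
    rw [hsum]
    exact Finset.sum_eq_single_of_mem m (a.support.min'_mem hsne)
      (fun k hk hkm => hvanish k hk hkm)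
  -- the endomorphism of G m
  set ψ : G m →ₗ[ℤ] G m :=
    (DFinsupp.lapply m) ∘ₗ A.subtype ∘ₗ φ m with hψ_def
  have hψam : ψ (a m) = a m := by
    have := congrArg (fun z : A => ((z : Π₀ k, G k)) m) hkey
    simpa [hψ_def] using this.symm
  have hψne : ψ ≠ 0 := fun h => ham (by rw [← hψam, h]; rfl)
  have hψinj : Function.Injective ψ := hendo m ψ hψne
  have hφminj : Function.Injective (φ m) := by
    have : Function.Injective ((DFinsupp.lapply m ∘ₗ A.subtype) ∘ (φ m)) := hψinj
    exact Function.Injective.of_comp this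
  have hle := (φ m).rank_le_of_injective hφminj
  rw [hrk m, hrkA] at hle
  norm_num at hle
end

section
/- Let G = ∏_{i∈I} G_i be a product of finite rank torsion-free abelian groups, each of rank at least 2, such that for every i there is g_i ∈ G_i with Hom(G_i, ⟨g_i⟩_*) = 0. If each ⟨(g_i)_{i∈I}⟩_* is reduced (hence slender), then Hom(G, ⟨(g_i)_{i∈I}⟩_*) = 0; in particular G is not a self-pure-generator. -/
open TensorProduct

universe u

set_option linter.unusedSectionVars false

section Main
variable {I : Type u} {G : I → Type u} [∀ i, AddCommGroup (G i)]
  [∀ i, NoZeroSMulDivisors ℤ (G i)]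

lemma pi_tf (c : ℤ) (x : ∀ i, G i) (hc : c ≠ 0) (h : c • x = 0) : x = 0 := by
  funext i
  have h2 : c • x i = 0 := by
    have := congrFun h i
    simpa using this
  rcases smul_eq_zero.mp h2 with h3 | h3
  · exact absurd h3 hc
  · exact h3

lemma hom_to_pureGen_zero (g : ∀ i, G i) (hg0 : ∀ i, g i ≠ 0)
    (hhom0 : ∀ i, ∀ f : G i →ₗ[ℤ] (pureGen ℤ (g i)), f = 0)
    (i : I) (φ : G i →ₗ[ℤ] pureGen ℤ g) : φ = 0 := by
  have hmem : ∀ y : G i, ((φ y : ∀ j, G j) i) ∈ pureGen ℤ (g i) := by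
    intro y
    obtain ⟨r, hr, s, hs⟩ := (φ y).2
    refine ⟨r, hr, s, ?_⟩
    have := congrFun hs i
    simpa using this
  set ψ : G i →ₗ[ℤ] pureGen ℤ (g i) :=
    { toFun := fun y => ⟨(φ y : ∀ j, G j) i, hmem y⟩
      map_add' := by
        intro y y'
        apply Subtype.ext
        simp [map_add]
      map_smul' := by
        intro c y
        apply Subtype.ext
        simp [map_smul] } with hψ
  have hψ0 := hhom0 i ψ
  apply LinearMap.ext
  intro y
  apply Subtype.ext
  have hyi : (φ y : ∀ j, G j) i = 0 := by
    have h1 : ψ y = 0 := by rw [hψ0]; rfl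
    have := congrArg Subtype.val h1
    simpa [hψ] using this
  obtain ⟨r, hr, s, hs⟩ := (φ y).2
  have hsi : s • g i = 0 := by
    have := congrFun hs i
    rw [show ((r • (φ y : ∀ j, G j)) i = r • (φ y : ∀ j, G j) i) from rfl] at this
    rw [hyi, smul_zero] at this
    have h2 := this.symm
    simpa using h2
  have hs0 : s = 0 := by
    rcases smul_eq_zero.mp hsi with h | h
    · exact h
    · exact absurd h (hg0 i)
  have hr0 : r • (φ y : ∀ j, G j) = 0 := by rw [hs, hs0, zero_smul]
  have hval : (φ y : ∀ j, G j) = 0 := pi_tf r _ hr hr0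
  simpa using hval



universe v



lemma countable_of_rank_lt_aleph0 {M : Type v} [AddCommGroup M]
    [NoZeroSMulDivisors ℤ M] (h : Module.rank ℤ M < Cardinal.aleph0) : Countable M := by
  classical
  obtain ⟨B, hB, hBmax⟩ := exists_maximal_linearIndepOn ℤ (id : M → M)
  have hBfin : B.Finite := by
    have hle : Cardinal.mk B ≤ Module.rank ℤ M := by
      have := hB.linearIndependent.cardinal_le_rank
      simpa using this
    exact Cardinal.lt_aleph0_iff_set_finite.mp (lt_of_le_of_lt hle h)
  have hrep : ∀ x : M, ∃ a : ℤ, a ≠ 0 ∧ a • x ∈ Submodule.span ℤ B := by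
    intro x
    by_cases hx : x ∈ B
    · exact ⟨1, one_ne_zero, by simpa using Submodule.subset_span hx⟩
    · obtain ⟨a, ha, hmem⟩ := hBmax x hx
      exact ⟨a, ha, by simpa using hmem⟩
  choose a ha hspan using hrep
  have hrep2 : ∀ x : M, ∃ c : M →₀ ℤ, ↑c.support ⊆ B ∧ (c.sum fun mi r => r • mi) = a x • x :=
    fun x => Submodule.mem_span_set.mp (hspan x)
  choose c hcsupp hcsum using hrep2
  haveI : Finite ↥B := hBfin.to_subtype
  set s : Finset M := hBfin.toFinset with hs
  have hsub : ∀ x : M, (c x).support ⊆ s := by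
    intro x b hb
    simp only [hs, Set.Finite.mem_toFinset]
    exact hcsupp x hb
  have hsum' : ∀ x : M, ∑ b ∈ s, (c x) b • b = a x • x := by
    intro x
    rw [← hcsum x]
    exact (Finsupp.sum_of_support_subset (c x) (hsub x) (fun mi r => r • mi) (fun i _ => zero_smul ℤ i)).symm
  set θ : M → (↥B → ℚ) := fun x b => ((c x) b : ℚ) / (a x : ℚ) with hθ
  have hinj : Function.Injective θ := by
    intro x y hxy
    have key : ∀ b ∈ s, (a y * (c x) b) • b = (a x * (c y) b) • b := by
      intro b hb
      have hbB : b ∈ B := by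
        simpa only [hs, Set.Finite.mem_toFinset] using hb
      have := congrFun hxy ⟨b, hbB⟩
      simp only [hθ] at this
      have hax : ((a x : ℚ)) ≠ 0 := Int.cast_ne_zero.mpr (ha x)
      have hay : ((a y : ℚ)) ≠ 0 := Int.cast_ne_zero.mpr (ha y)
      rw [div_eq_div_iff hax hay] at this
      have : ((a y * (c x) b : ℤ) : ℚ) = ((a x * (c y) b : ℤ) : ℚ) := by
        push_cast
        linarith [this]
      have hz : (a y * (c x) b : ℤ) = a x * (c y) b := Int.cast_injective this
      rw [hz]
    have h1 : (a y * a x) • x = (a x * a y) • y := by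
      calc (a y * a x) • x = a y • (a x • x) := by rw [mul_smul]
        _ = a y • ∑ b ∈ s, (c x) b • b := by rw [hsum' x]
        _ = ∑ b ∈ s, (a y * (c x) b) • b := by
            rw [Finset.smul_sum]; exact Finset.sum_congr rfl fun b _ => (mul_smul (a y) ((c x) b) b).symm
        _ = ∑ b ∈ s, (a x * (c y) b) • b := Finset.sum_congr rfl key
        _ = a x • ∑ b ∈ s, (c y) b • b := by
            rw [Finset.smul_sum]; exact Finset.sum_congr rfl fun b _ => (mul_smul (a x) ((c y) b) b)
        _ = a x • (a y • y) := by rw [hsum' y]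
        _ = (a x * a y) • y := by rw [mul_smul]
    rw [mul_comm (a y) (a x)] at h1
    exact smul_right_injective M (mul_ne_zero (ha x) (ha y)) h1
  exact hinj.countable



lemma mem_pureGen_s17 {R A : Type*} [CommRing R] [IsDomain R] [AddCommGroup A] [Module R A]
    {a x : A} : x ∈ pureGen R a ↔ ∃ r : R, r ≠ 0 ∧ ∃ s : R, r • x = s • a := Iff.rfl

lemma countable_pureGen {A : Type v} [AddCommGroup A]
    (hA : ∀ (c : ℤ) (x : A), c ≠ 0 → c • x = 0 → x = 0) (a : A) :
    Countable (pureGen ℤ a) := by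
  classical
  have hmem : ∀ x : pureGen ℤ a, ∃ r : ℤ, r ≠ 0 ∧ ∃ s : ℤ, r • (x : A) = s • a := fun x => x.2
  choose r hr s hs using hmem
  have hinj : Function.Injective (fun x : pureGen ℤ a => ((s x : ℚ) / (r x : ℚ))) := by
    intro x y hxy
    simp only at hxy
    rw [div_eq_div_iff (Int.cast_ne_zero.mpr (hr x)) (Int.cast_ne_zero.mpr (hr y))] at hxy
    have hcast : ((s x * r y : ℤ) : ℚ) = ((s y * r x : ℤ) : ℚ) := by push_cast; linarith
    have hk : s x * r y = s y * r x := Int.cast_injective hcast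
    have h1 : (r y * r x) • ((x : A) - (y : A)) = 0 := by
      have e1 : (r y * r x) • (x : A) = (r y * s x) • a := by
        rw [mul_smul, hs x, smul_smul]
      have e2 : (r y * r x) • (y : A) = (r x * s y) • a := by
        rw [mul_comm, mul_smul, hs y, smul_smul]
      have e3 : (r y * s x : ℤ) = r x * s y := by linarith [hk]
      rw [smul_sub, e1, e2, e3, sub_self]
    have h2 : (x : A) - (y : A) = 0 := hA _ _ (mul_ne_zero (hr y) (hr x)) h1
    exact Subtype.ext (by rw [← sub_eq_zero]; exact h2)
  exact hinj.countable




section Specker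

lemma sub_tf (S : Submodule ℤ (∀ i, G i)) (c : ℤ) (y : S) (hc : c ≠ 0) (h : c • y = 0) :
    y = 0 := by
  apply Subtype.ext
  have : c • (y : ∀ i, G i) = 0 := by
    have := congrArg (Subtype.val) h
    simpa using this
  simpa using pi_tf c (y : ∀ i, G i) hc this

lemma specker {S : Submodule ℤ (∀ i, G i)}
    (hSc : Countable S)
    (hred : ∀ x : S, (∀ n : ℤ, n ≠ 0 → ∃ y : S, n • y = x) → x = 0)
    (f : (∀ i, G i) →ₗ[ℤ] S) (w : ℕ → ∀ i, G i)
    (hev : ∀ i, ∃ N : ℕ, ∀ j, N ≤ j → w j i = 0)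
    (hnz : ∀ j, f (w j) ≠ 0) : False := by
  classical
  -- the m-sequence
  have key : ∀ t : S, t ≠ 0 → ∃ n : ℤ, n ≠ 0 ∧ ∀ y : S, n • y ≠ t := by
    intro t ht
    by_contra h
    push_neg at h
    refine ht (hred t ?_)
    intro n hn
    obtain ⟨y, hy⟩ := h n hn
    exact ⟨y, hy⟩
  choose m' hm'ne hm'key using fun j => key (f (w j)) (hnz j)
  set m : ℕ → ℤ := fun j => Nat.casesOn j 1 m' with hm
  have hmne : ∀ j, m j ≠ 0 := by
    intro j
    cases j with
    | zero => exact one_ne_zero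
    | succ j => exact hm'ne j
  set M : ℕ → ℤ := fun j => ∏ l ∈ Finset.range (j + 1), m l with hMdef
  have hMne : ∀ j, M j ≠ 0 := by
    intro j
    rw [hMdef]
    exact Finset.prod_ne_zero_iff.mpr fun l _ => hmne l
  have hMsucc : ∀ j, M (j + 1) = M j * m (j + 1) := by
    intro j
    rw [hMdef]
    exact Finset.prod_range_succ m (j + 1)
  set Q : ℕ → ℕ → ℤ := fun J j => ∏ l ∈ Finset.Ioc J j, m l with hQdef
  have hMQ : ∀ J j, J ≤ j → M j = M J * Q J j := by
    intro J j h
    induction j, h using Nat.le_induction with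
    | base => simp [hQdef]
    | succ j hJj ih =>
        rw [hMsucc j, ih]
        simp only [hQdef]
        rw [Finset.prod_Ioc_succ_top hJj m]
        ring
  -- coordinatewise bound
  choose N hN using hev
  -- the summation operator
  set Y : (ℕ → ℤ) → ∀ i, G i := fun c => fun i => ∑ j ∈ Finset.range (N i), c j • w j i with hY
  have hYstable : ∀ (c : ℕ → ℤ) (i : I) (n : ℕ), N i ≤ n →
      ∑ j ∈ Finset.range n, c j • w j i = Y c i := by
    intro c i n hn
    refine (Finset.sum_subset (Finset.range_subset_range.mpr hn) ?_).symm
    intro j _ hj2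
    rw [hN i j (le_of_not_gt fun hlt => hj2 (Finset.mem_range.mpr hlt)), smul_zero]
  set cT : Set ℕ → ℕ → ℤ := fun T j => if j ∈ T then M j else 0 with hcT
  -- key decomposition
  have hdec : ∀ (T : Set ℕ) (J : ℕ),
      f (Y (cT T)) = (∑ j ∈ Finset.range J, cT T j • f (w j)) +
        M J • f (Y fun j => if j ∈ T ∧ J ≤ j then Q J j else 0) := by
    intro T J
    set c2 : ℕ → ℤ := fun j => if j ∈ T ∧ J ≤ j then Q J j else 0 with hc2
    have hYeq : Y (cT T) = (∑ j ∈ Finset.range J, cT T j • w j) + M J • Y c2 := by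
      funext i
      set n := max (N i) J with hn
      have hNin : N i ≤ n := le_max_left _ _
      have hJn : J ≤ n := le_max_right _ _
      have lhs : Y (cT T) i = ∑ j ∈ Finset.range n, cT T j • w j i :=
        (hYstable (cT T) i n hNin).symm
      have hsplit : ∑ j ∈ Finset.range n, cT T j • w j i =
          (∑ j ∈ Finset.Ico 0 J, cT T j • w j i) + ∑ j ∈ Finset.Ico J n, cT T j • w j i := by
        rw [Finset.sum_Ico_consecutive _ (Nat.zero_le J) hJn, ← Finset.range_eq_Ico]
      have hterm : ∀ j ∈ Finset.Ico J n, cT T j • w j i = M J • (c2 j • w j i) := by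
        intro j hj
        have hJj : J ≤ j := (Finset.mem_Ico.mp hj).1
        by_cases hjT : j ∈ T
        · rw [hcT, hc2]
          simp only [hjT, hJj, if_true, and_true, if_pos]
          rw [hMQ J j hJj, mul_smul]
        · rw [hcT, hc2]
          simp [hjT]
      have htail : ∑ j ∈ Finset.Ico J n, cT T j • w j i = M J • ∑ j ∈ Finset.Ico J n, c2 j • w j i := by
        rw [Finset.smul_sum]
        exact Finset.sum_congr rfl hterm
      have htail2 : ∑ j ∈ Finset.Ico J n, c2 j • w j i = Y c2 i := by
        have : ∑ j ∈ Finset.range n, c2 j • w j i =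
            (∑ j ∈ Finset.Ico 0 J, c2 j • w j i) + ∑ j ∈ Finset.Ico J n, c2 j • w j i := by
          rw [Finset.sum_Ico_consecutive _ (Nat.zero_le J) hJn, ← Finset.range_eq_Ico]
        have hpre : ∑ j ∈ Finset.Ico 0 J, c2 j • w j i = 0 := by
          apply Finset.sum_eq_zero
          intro j hj
          have : ¬ J ≤ j := by
            have := (Finset.mem_Ico.mp hj).2
            omega
          rw [hc2]
          simp [this]
        rw [← hYstable c2 i n hNin, this, hpre, zero_add]
      calc Y (cT T) i = ∑ j ∈ Finset.range n, cT T j • w j i := lhs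
        _ = (∑ j ∈ Finset.Ico 0 J, cT T j • w j i) + ∑ j ∈ Finset.Ico J n, cT T j • w j i := hsplit
        _ = (∑ j ∈ Finset.range J, cT T j • w j i) + M J • Y c2 i := by
            rw [← Finset.range_eq_Ico, htail, htail2]
        _ = ((∑ j ∈ Finset.range J, cT T j • w j) + M J • Y c2) i := by
            simp [Finset.sum_apply]
    rw [hYeq, map_add, map_smul, map_sum]
    congr 1
    refine Finset.sum_congr rfl fun j _ => ?_
    rw [map_smul]
  set Φ : Set ℕ → S := fun T => f (Y (cT T)) with hΦ
  have hcol : ∀ T T' : Set ℕ, Φ T = Φ T' → ∀ j₀ : ℕ,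
      (∀ j, j < j₀ → (j ∈ T ↔ j ∈ T')) → j₀ ∈ T → j₀ ∉ T' → False := by
    intro T T' heq j₀ hagree hT hT'
    have h1 := hdec T (j₀ + 1)
    have h2 := hdec T' (j₀ + 1)
    set d1 := f (Y fun j => if j ∈ T ∧ j₀ + 1 ≤ j then Q (j₀ + 1) j else 0) with hd1
    set d2 := f (Y fun j => if j ∈ T' ∧ j₀ + 1 ≤ j then Q (j₀ + 1) j else 0) with hd2
    have e : (∑ j ∈ Finset.range (j₀ + 1), cT T j • f (w j)) + M (j₀ + 1) • d1
           = (∑ j ∈ Finset.range (j₀ + 1), cT T' j • f (w j)) + M (j₀ + 1) • d2 := by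
      rw [← h1, ← h2]
      exact heq
    rw [Finset.sum_range_succ, Finset.sum_range_succ] at e
    have hpre : ∑ j ∈ Finset.range j₀, cT T j • f (w j)
        = ∑ j ∈ Finset.range j₀, cT T' j • f (w j) := by
      refine Finset.sum_congr rfl fun j hj => ?_
      have hiff := hagree j (Finset.mem_range.mp hj)
      by_cases hjT : j ∈ T
      · have hjT' : j ∈ T' := hiff.mp hjT
        simp [hcT, hjT, hjT']
      · have hjT' : j ∉ T' := fun h => hjT (hiff.mpr h)
        simp [hcT, hjT, hjT']
    have hj0T : cT T j₀ = M j₀ := by simp [hcT, hT]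
    have hj0T' : cT T' j₀ = 0 := by simp [hcT, hT']
    rw [hpre, hj0T, hj0T', zero_smul, add_zero, add_assoc] at e
    have e2 : M j₀ • f (w j₀) + M (j₀ + 1) • d1 = M (j₀ + 1) • d2 :=
      (add_right_inj _).mp e
    have e3 : M j₀ • f (w j₀) = M (j₀ + 1) • (d2 - d1) := by
      rw [smul_sub]
      exact eq_sub_of_add_eq e2
    rw [hMsucc j₀, mul_smul] at e3
    have e4 : f (w j₀) = m (j₀ + 1) • (d2 - d1) := by
      have h5 : M j₀ • (f (w j₀) - m (j₀ + 1) • (d2 - d1)) = 0 := by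
        rw [smul_sub]
        exact sub_eq_zero.mpr e3
      have h6 := sub_tf S (M j₀) _ (hMne j₀) h5
      exact sub_eq_zero.mp h6
    exact hm'key j₀ (d2 - d1) e4.symm
  have hΦinj : Function.Injective Φ := by
    intro T T' heq
    by_contra hne
    have hex : ∃ j, ¬(j ∈ T ↔ j ∈ T') := by
      by_contra h
      push_neg at h
      exact hne (Set.ext fun j => h j)
    have hj₀ := Nat.find_spec hex
    have hmin : ∀ j, j < Nat.find hex → (j ∈ T ↔ j ∈ T') :=
      fun j hj => of_not_not (Nat.find_min hex hj)
    rcases Decidable.em (Nat.find hex ∈ T) with hT | hT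
    · have hT' : Nat.find hex ∉ T' := fun h => hj₀ ⟨fun _ => h, fun _ => hT⟩
      exact hcol T T' heq _ hmin hT hT'
    · have hT' : Nat.find hex ∈ T' := by
        by_contra h
        exact hj₀ ⟨fun h2 => absurd h2 hT, fun h2 => absurd h2 h⟩
      exact hcol T' T heq.symm _ (fun j hj => (hmin j hj).symm) hT' hT
  obtain ⟨e, he⟩ := Countable.exists_injective_nat S
  exact Function.cantor_injective (fun T => e (Φ T)) (he.comp hΦinj)

open Classical in
noncomputable def res (J : Set I) (x : ∀ i, G i) : ∀ i, G i :=
  fun i => if i ∈ J then x i else 0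

lemma res_mem {J : Set I} {x : ∀ i, G i} {i : I} (h : i ∈ J) : res J x i = x i := by
  simp [res, h]

lemma res_not_mem {J : Set I} {x : ∀ i, G i} {i : I} (h : i ∉ J) : res J x i = 0 := by
  simp [res, h]

def NullSet {S : Submodule ℤ (∀ i, G i)} (f : (∀ i, G i) →ₗ[ℤ] S) (J : Set I) : Prop :=
  ∀ x : ∀ i, G i, (∀ i, i ∉ J → x i = 0) → f x = 0

section NullCombinatorics

variable {S : Submodule ℤ (∀ i, G i)} (f : (∀ i, G i) →ₗ[ℤ] S)

lemma null_mono {J J' : Set I} (h : J ⊆ J') (hJ' : NullSet f J') : NullSet f J := by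
  intro x hx
  exact hJ' x fun i hi => hx i fun hiJ => hi (h hiJ)

lemma null_union {J L : Set I} (hJ : NullSet f J) (hL : NullSet f L) : NullSet f (J ∪ L) := by
  intro x hx
  have hx2 : x = res J x + (x - res J x) := by abel
  have h1 : f (res J x) = 0 := hJ (res J x) fun i hi => res_not_mem hi
  have h2 : f (x - res J x) = 0 := by
    refine hL (x - res J x) fun i hi => ?_
    by_cases hiJ : i ∈ J
    · simp [res_mem hiJ]
    · have : x i = 0 := hx i fun hor => hor.elim hiJ hi
      simp [res_not_mem hiJ, this]
  rw [hx2, map_add, h1, h2, add_zero]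

lemma null_empty : NullSet f (∅ : Set I) := by
  intro x hx
  have : x = 0 := funext fun i => hx i (by simp)
  rw [this, map_zero]

lemma null_biUnion_lt (K : ℕ → Set I) (h : ∀ l, NullSet f (K l)) (n : ℕ) :
    NullSet f {i | ∃ l, l < n ∧ i ∈ K l} := by
  induction n with
  | zero => exact null_mono f (by intro i hi; simp at hi) (null_empty f)
  | succ n ih =>
      have heq : {i | ∃ l, l < n + 1 ∧ i ∈ K l} = {i | ∃ l, l < n ∧ i ∈ K l} ∪ K n := by
        ext i
        constructor
        · rintro ⟨l, hl, hi⟩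
          rcases Nat.lt_succ_iff_lt_or_eq.mp hl with h' | rfl
          · exact Or.inl ⟨l, h', hi⟩
          · exact Or.inr hi
        · rintro (⟨l, hl, hi⟩ | hi)
          · exact ⟨l, Nat.lt_succ_of_lt hl, hi⟩
          · exact ⟨n, Nat.lt_succ_self n, hi⟩
      rw [heq]
      exact null_union f ih (h n)

lemma null_sigma (hSc : Countable S)
    (hred : ∀ x : S, (∀ n : ℤ, n ≠ 0 → ∃ y : S, n • y = x) → x = 0)
    (K : ℕ → Set I) (h : ∀ n, NullSet f (K n)) : NullSet f (⋃ n, K n) := by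
  classical
  intro x hx
  by_contra hfx
  set c : I → ℕ := fun i => if h' : ∃ n, i ∈ K n then Nat.find h' else 0 with hc
  set w : ℕ → ∀ i, G i := fun j => res {i | j ≤ c i} x with hw
  have hev : ∀ i, ∃ N : ℕ, ∀ j, N ≤ j → w j i = 0 := by
    intro i
    refine ⟨c i + 1, fun j hj => ?_⟩
    have : i ∉ {i' | j ≤ c i'} := by
      simp only [Set.mem_setOf_eq]
      omega
    exact res_not_mem this
  have hnz : ∀ j, f (w j) ≠ 0 := by
    intro j
    have hdiff : f (x - w j) = 0 := by
      refine null_biUnion_lt f K h j (x - w j) fun i hi => ?_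
      by_cases hij : j ≤ c i
      · have : i ∈ {i' | j ≤ c i'} := hij
        simp [hw, res_mem this]
      · by_cases hxi : x i = 0
        · have : i ∉ {i' | j ≤ c i'} := hij
          simp [hw, res_not_mem this, hxi]
        · exfalso
          have hiU : ∃ n, i ∈ K n := by
            have := hx i
            by_contra hno
            exact hxi (this fun hiU => hno (by simpa using hiU))
          have hci : i ∈ K (c i) := by
            rw [hc]
            simp only [hiU, dif_pos]
            exact Nat.find_spec hiU
          exact hi ⟨c i, by omega, hci⟩
    intro hwj
    apply hfx
    have : f x = f (x - w j) + f (w j) := by rw [← map_add]; congr 1; abel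
    rw [this, hdiff, hwj, add_zero]
  exact specker hSc hred f w hev hnz

lemma nonnull_witness {J : Set I} (h : ¬ NullSet f J) :
    ∃ x : ∀ i, G i, (∀ i, i ∉ J → x i = 0) ∧ f x ≠ 0 := by
  by_contra h'
  push_neg at h'
  exact h fun x hx => by
    by_contra hfx
    exact hfx (h' x hx)

lemma exists_atom (hSc : Countable S)
    (hred : ∀ x : S, (∀ n : ℤ, n ≠ 0 → ∃ y : S, n • y = x) → x = 0)
    (hf : ¬ NullSet f Set.univ) :
    ∃ K : Set I, ¬ NullSet f K ∧ ∀ L ⊆ K, NullSet f L ∨ NullSet f (K \ L) := by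
  by_contra hno
  push_neg at hno
  have hno' : ∀ K : {J : Set I // ¬ NullSet f J},
      ∃ L : Set I, L ⊆ K.1 ∧ ¬ NullSet f L ∧ ¬ NullSet f (K.1 \ L) := by
    intro K
    obtain ⟨L, hL1, hL2, hL3⟩ := hno K.1 K.2
    exact ⟨L, hL1, hL2, hL3⟩
  choose L hLsub hLnn hLrest using hno'
  set seq : ℕ → {J : Set I // ¬ NullSet f J} := fun n =>
    Nat.rec ⟨Set.univ, hf⟩ (fun _ K => ⟨K.1 \ L K, hLrest K⟩) n with hseq
  have hstep : ∀ n, (seq (n + 1)).1 = (seq n).1 \ L (seq n) := fun n => rfl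
  have hmono : ∀ n m, n ≤ m → (seq m).1 ⊆ (seq n).1 := by
    intro n m hnm
    induction m, hnm using Nat.le_induction with
    | base => exact subset_rfl
    | succ m hnm ih =>
        refine subset_trans ?_ ih
        rw [hstep m]
        exact Set.diff_subset
  have hdisj : ∀ n m, n < m → ∀ i, i ∈ L (seq n) → i ∉ L (seq m) := by
    intro n m hnm i hin him
    have h1 : i ∈ (seq m).1 := hLsub (seq m) him
    have h2 : (seq m).1 ⊆ (seq (n + 1)).1 := hmono (n + 1) m hnm
    have h3 : i ∈ (seq n).1 \ L (seq n) := by rw [← hstep n]; exact h2 h1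
    exact h3.2 hin
  choose xw hxw hfxw using fun n => nonnull_witness f (hLnn (seq n))
  have hev : ∀ i, ∃ N : ℕ, ∀ j, N ≤ j → xw j i = 0 := by
    intro i
    by_cases h' : ∃ n, i ∈ L (seq n)
    · obtain ⟨n, hn⟩ := h'
      refine ⟨n + 1, fun j hj => ?_⟩
      refine hxw j i fun hij => ?_
      exact hdisj n j (by omega) i hn hij
    · push_neg at h'
      exact ⟨0, fun j _ => hxw j i (h' j)⟩
  exact specker hSc hred f xw hev hfxw

end NullCombinatorics
end Specker


lemma homzero (g : ∀ i, G i)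
    (hfin : ∀ i, Module.rank ℤ (G i) < Cardinal.aleph0)
    (hg0 : ∀ i, g i ≠ 0)
    (hhom0 : ∀ i, ∀ f : G i →ₗ[ℤ] (pureGen ℤ (g i)), f = 0)
    (hred : ∀ x : pureGen ℤ g,
      (∀ n : ℤ, n ≠ 0 → ∃ y : pureGen ℤ g, n • y = x) → x = 0)
    (f : (∀ i, G i) →ₗ[ℤ] pureGen ℤ g) : f = 0 := by
  classical
  have hSc : Countable (pureGen ℤ g) := countable_pureGen (fun c x => pi_tf c x) g
  by_contra hf0
  have hfa : ∃ a, f a ≠ 0 := by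
    by_contra h
    push_neg at h
    exact hf0 (LinearMap.ext fun a => h a)
  obtain ⟨a, hfa⟩ := hfa
  have hnu : ¬ NullSet f Set.univ := fun h => hfa (h a fun i hi => absurd (Set.mem_univ i) hi)
  obtain ⟨K, hKnn, hKatom⟩ := exists_atom f hSc hred hnu
  have hC : ∀ c : I → ℕ, ∃ v : ℕ, NullSet f (K \ c ⁻¹' {v}) := by
    intro c
    have h1 : ∃ v, ¬ NullSet f (c ⁻¹' {v} ∩ K) := by
      by_contra h
      push_neg at h
      apply hKnn
      refine null_mono f ?_ (null_sigma f hSc hred (fun v => c ⁻¹' {v} ∩ K) h)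
      intro i hi
      refine Set.mem_iUnion.mpr ⟨c i, ?_⟩
      exact ⟨rfl, hi⟩
    obtain ⟨v, hv⟩ := h1
    rcases hKatom (c ⁻¹' {v} ∩ K) Set.inter_subset_right with h | h
    · exact absurd h hv
    · refine ⟨v, null_mono f ?_ h⟩
      intro i hi
      exact ⟨hi.1, fun hmem => hi.2 hmem.1⟩
  haveI hcg : ∀ i, Countable (G i) := fun i => countable_of_rank_lt_aleph0 (hfin i)
  have hsurj : ∀ i, ∃ en : ℕ → G i, Function.Surjective en := by
    intro i
    haveI : Nonempty (G i) := ⟨0⟩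
    exact exists_surjective_nat (G i)
  choose en hen using hsurj
  set idx : ∀ i, G i → ℕ := fun i y => Nat.find (hen i y) with hidxdef
  have hidx : ∀ i y, en i (idx i y) = y := fun i y => Nat.find_spec (hen i y)
  set cm : ℕ → I → ℕ := fun m i => idx i (en i (Nat.unpair m).1 + en i (Nat.unpair m).2)
    with hcm
  choose v hv using fun m => hC (cm m)
  set B : Set I := K ∩ ⋂ m, (cm m) ⁻¹' {v m} with hB
  have hBsub : B ⊆ K := Set.inter_subset_left
  have hKB : K \ B = ⋃ m, (K \ (cm m) ⁻¹' {v m}) := by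
    ext i
    constructor
    · rintro ⟨hiK, hiB⟩
      have h2 : ¬ (i ∈ ⋂ m, (cm m) ⁻¹' {v m}) := fun h => hiB ⟨hiK, h⟩
      rw [Set.mem_iInter] at h2
      push_neg at h2
      obtain ⟨m, hm⟩ := h2
      exact Set.mem_iUnion.mpr ⟨m, hiK, hm⟩
    · intro hi
      obtain ⟨m, hiK, hm⟩ := Set.mem_iUnion.mp hi
      refine ⟨hiK, fun hiB => hm ?_⟩
      exact (Set.mem_iInter.mp hiB.2) m
  have hKBnull : NullSet f (K \ B) := by
    rw [hKB]
    exact null_sigma f hSc hred _ (fun m => hv m)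
  have hBnn : ¬ NullSet f B := by
    intro h
    apply hKnn
    refine null_mono f ?_ (null_union f h hKBnull)
    intro i hi
    by_cases hiB : i ∈ B
    · exact Or.inl hiB
    · exact Or.inr ⟨hi, hiB⟩
  have hBcode : ∀ i ∈ B, ∀ (m : ℕ), cm m i = v m := by
    intro i hi m
    have := (Set.mem_iInter.mp hi.2) m
    simpa using this
  obtain ⟨z, hz, hfz⟩ := nonnull_witness f hBnn
  set zc : I → ℕ := fun i => idx i (z i) with hzc
  obtain ⟨v', hv'⟩ := hC zc
  set B' : Set I := B ∩ zc ⁻¹' {v'} with hB'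
  have hB'sub : B' ⊆ B := Set.inter_subset_left
  have hfz' : f (res B' z) = f z := by
    have h0 : f (z - res B' z) = 0 := by
      refine hv' _ fun i hi => ?_
      by_cases hiB' : i ∈ B'
      · have : res B' z i = z i := res_mem hiB'
        show z i - res B' z i = 0
        rw [this, sub_self]
      · show z i - res B' z i = 0
        rw [res_not_mem hiB', sub_zero]
        by_cases hiB : i ∈ B
        · exfalso
          exact hi ⟨hBsub hiB, fun hmem => hiB' ⟨hiB, hmem⟩⟩
        · exact hz i hiB
    have h2 : f z = f (z - res B' z) + f (res B' z) := by
      rw [← map_add]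
      congr 1
      abel
    rw [h2, h0, zero_add]
  have hrzne : res B' z ≠ 0 := by
    intro h
    rw [h, map_zero] at hfz'
    exact hfz hfz'.symm
  have hi0 : ∃ i0, res B' z i0 ≠ 0 := by
    by_contra h
    push_neg at h
    exact hrzne (funext h)
  obtain ⟨i0, hi0ne⟩ := hi0
  have hi0B' : i0 ∈ B' := by
    by_contra h
    exact hi0ne (res_not_mem h)
  have hi0B : i0 ∈ B := hB'sub hi0B'
  set xx : G i0 → ∀ i, G i := fun y => res B (fun i => en i (idx i0 y)) with hxx
  have henB : ∀ (i) (_ : i ∈ B) (a b : ℕ), en i (idx i0 (en i0 a + en i0 b)) = en i a + en i b := by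
    intro i hiB a b
    have h1 : idx i0 (en i0 a + en i0 b) = cm (Nat.pair a b) i0 := by
      rw [hcm]
      simp only [Nat.unpair_pair]
    have h2 : cm (Nat.pair a b) i0 = v (Nat.pair a b) := hBcode i0 hi0B _
    have h3 : cm (Nat.pair a b) i = v (Nat.pair a b) := hBcode i hiB _
    have h4 : en i (cm (Nat.pair a b) i) = en i a + en i b := by
      rw [hcm]
      simp only [Nat.unpair_pair]
      exact hidx i _
    rw [h1, h2, ← h3, h4]
  have hxxadd : ∀ y y', xx (y + y') = xx y + xx y' := by
    intro y y'
    funext i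
    show xx (y + y') i = xx y i + xx y' i
    by_cases hiB : i ∈ B
    · rw [hxx]
      simp only
      rw [res_mem hiB, res_mem hiB, res_mem hiB]
      have hyy : y + y' = en i0 (idx i0 y) + en i0 (idx i0 y') := by
        rw [hidx, hidx]
      rw [hyy, henB i hiB]
    · rw [hxx]
      simp only
      rw [res_not_mem hiB, res_not_mem hiB, res_not_mem hiB, add_zero]
  set Φ0 : G i0 →+ pureGen ℤ g :=
    AddMonoidHom.mk' (fun y => f (xx y)) (fun y y' => by
      show f (xx (y + y')) = f (xx y) + f (xx y')
      rw [hxxadd, map_add]) with hΦ0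
  have hΦne : Φ0 (z i0) ≠ 0 := by
    have hz0 : zc i0 = v' := by
      have := hi0B'.2
      simpa using this
    have hkey : f (xx (z i0)) = f (res B' z) := by
      have h0 : f (xx (z i0) - res B' z) = 0 := by
        refine hv' _ fun i hi => ?_
        show xx (z i0) i - res B' z i = 0
        by_cases hiB' : i ∈ B'
        · have hiB : i ∈ B := hB'sub hiB'
          rw [hxx]
          simp only
          rw [res_mem hiB, res_mem hiB']
          have h1 : idx i0 (z i0) = v' := hz0
          have h2 : zc i = v' := by
            have := hiB'.2
            simpa using this
          have h3 : en i v' = z i := by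
            rw [← h2, hzc]
            exact hidx i (z i)
          rw [h1, h3, sub_self]
        · by_cases hiB : i ∈ B
          · exfalso
            exact hi ⟨hBsub hiB, fun hmem => hiB' ⟨hiB, hmem⟩⟩
          · rw [hxx]
            simp only
            rw [res_not_mem hiB, res_not_mem (fun h : i ∈ B' => hiB (hB'sub h)), sub_zero]
      have h2 : f (xx (z i0)) = f (xx (z i0) - res B' z) + f (res B' z) := by
        rw [← map_add]
        congr 1
        abel
      rw [h2, h0, zero_add]
    show f (xx (z i0)) ≠ 0
    rw [hkey, hfz']
    exact hfz
  have hφ := hom_to_pureGen_zero g hg0 hhom0 i0 (Φ0.toIntLinearMap)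
  apply hΦne
  have h5 : Φ0.toIntLinearMap (z i0) = 0 := by rw [hφ]; rfl
  simpa using h5

end Main

/-- Let `G = ∏_{i ∈ I} G i` be a product of finite rank
torsion-free abelian groups, each of rank at least `2`, and `g i ∈ G i` nonzero
with `Hom(G i, ⟨g i⟩_*) = 0` for each `i`.  If `⟨(g i)_i⟩_*` is reduced, then
`Hom(G, ⟨(g i)_i⟩_*) = 0`; in particular `G` is not a self-pure-generator. -/
theorem stmt17 (I : Type u) [Nonempty I] (G : I → Type u)
    [∀ i, AddCommGroup (G i)] [∀ i, NoZeroSMulDivisors ℤ (G i)]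
    (hfin : ∀ i, Module.rank ℤ (G i) < Cardinal.aleph0)
    (hrk2 : ∀ i, 2 ≤ Module.rank ℤ (G i))
    (g : ∀ i, G i) (hg0 : ∀ i, g i ≠ 0)
    (hhom0 : ∀ i, ∀ f : G i →ₗ[ℤ] (pureGen ℤ (g i)), f = 0)
    (hred : ∀ x : pureGen ℤ g,
      (∀ n : ℤ, n ≠ 0 → ∃ y : pureGen ℤ g, n • y = x) → x = 0) :
    (∀ f : (∀ i, G i) →ₗ[ℤ] (pureGen ℤ g), f = 0) ∧
      ¬ SelfPureGenerator ℤ (∀ i, G i) := by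
  have part1 : ∀ f : (∀ i, G i) →ₗ[ℤ] (pureGen ℤ g), f = 0 :=
    fun f => homzero g hfin hg0 hhom0 hred f
  refine ⟨part1, ?_⟩
  intro hSP
  have hpure : IsPureSubmodule ℤ (pureGen ℤ g) := by
    intro r x hr hmem
    obtain ⟨r', hr', s, hs⟩ := hmem
    exact ⟨r' * r, mul_ne_zero hr' hr, s, by rw [mul_smul]; exact hs⟩
  obtain ⟨ι, F, hF⟩ := hSP (pureGen ℤ g) hpure
  have hgS : g ∈ pureGen ℤ g := ⟨1, one_ne_zero, 1, rfl⟩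
  obtain ⟨vv, hvv⟩ := hF ⟨g, hgS⟩
  have hzero : ∀ w : ι →₀ (∀ i, G i), F w = 0 := by
    intro w
    induction w using Finsupp.induction with
    | zero => exact map_zero F
    | single_add a b w' ha' hb' ih =>
        rw [map_add, ih, add_zero]
        have hcomp := part1 (F.comp (Finsupp.lsingle a))
        have h6 := congrArg (fun (h : (∀ i, G i) →ₗ[ℤ] pureGen ℤ g) => h b) hcomp
        simpa using h6
  have hgz : (⟨g, hgS⟩ : pureGen ℤ g) = 0 := by rw [← hvv]; exact hzero vv
  have hg' : g = (0 : ∀ i, G i) := congrArg Subtype.val hgz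
  have i0 : I := Classical.arbitrary I
  exact hg0 i0 (congrFun hg' i0)
end
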